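/- Let (x1, x2, z1) be a point satisfying the first-order conditions (1 − σ)·(p(x1 + x2) + x1·p′(x1 + x2)) = C′(x1) and q·F′(x1·p(x1 + x2) − z1) = (1 − q)·σ, with C′(x1) > 0 and p(x1 + x2) > 0. If F″(x1·p(x1 + x2) − z1) > 0, C″(x1) ≥ 0, p′(x1 + x2) < 0, p′(x1 + x2) + x1·p″(x1 + x2) ≤ 0, and p(x1 + x2) + 2·x1·p′(x1 + x2) ≥ 0, then both inequalities hold at this point: (In2): P_{x1x1}·P_{z1z1} − (P_{x1z1})² > |P_{x1x2}·P_{z1z1} − P_{x1z1}·P_{x2z1}|, and (In3): −P_{x1x1} ≥ |P_{x1x2}|, where subscripts on P denote iterated partial derivatives. -/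

import Mathlib

/-- The profit function
`P(x1, x2, z1) = (1 - qσ) x1 p(x1+x2) - C(x1) - (1-q)σ z1 - q F(x1 p(x1+x2) - z1)`. -/
noncomputable def P (σ q : ℝ) (p C F : ℝ → ℝ) (x1 x2 z1 : ℝ) : ℝ :=
  (1 - q * σ) * x1 * p (x1 + x2) - C x1 - (1 - q) * σ * z1
    - q * F (x1 * p (x1 + x2) - z1)

/-- `∂²P/∂x1²` at `(x1, x2, z1)`. -/
noncomputable def Px1x1 (σ q : ℝ) (p C F : ℝ → ℝ) (x1 x2 z1 : ℝ) : ℝ :=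
  deriv (deriv (fun v => P σ q p C F v x2 z1)) x1

/-- `∂²P/∂z1²` at `(x1, x2, z1)`. -/
noncomputable def Pz1z1 (σ q : ℝ) (p C F : ℝ → ℝ) (x1 x2 z1 : ℝ) : ℝ :=
  deriv (deriv (fun w => P σ q p C F x1 x2 w)) z1

/-- `∂²P/∂x1∂z1` at `(x1, x2, z1)` (first differentiate in `x1`, then in `z1`). -/
noncomputable def Px1z1 (σ q : ℝ) (p C F : ℝ → ℝ) (x1 x2 z1 : ℝ) : ℝ :=
  deriv (fun w => deriv (fun v => P σ q p C F v x2 w) x1) z1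

/-- `∂²P/∂x1∂x2` at `(x1, x2, z1)` (first differentiate in `x1`, then in `x2`). -/
noncomputable def Px1x2 (σ q : ℝ) (p C F : ℝ → ℝ) (x1 x2 z1 : ℝ) : ℝ :=
  deriv (fun u => deriv (fun v => P σ q p C F v u z1) x1) x2

/-- `∂²P/∂x2∂z1` at `(x1, x2, z1)` (first differentiate in `x2`, then in `z1`). -/
noncomputable def Px2z1 (σ q : ℝ) (p C F : ℝ → ℝ) (x1 x2 z1 : ℝ) : ℝ :=
  deriv (fun w => deriv (fun u => P σ q p C F x1 u w) x2) z1

/-- at a point satisfying both first-order conditions with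
`C' > 0` and `p > 0`, if `F'' > 0`, `C'' ≥ 0`, `p' < 0`, `p' + x1 p'' ≤ 0` and
`p + 2 x1 p' ≥ 0` there, then both (In2) and (In3) hold. -/
theorem stmt_5 (σ q : ℝ) (hσ0 : 0 < σ) (hσ1 : σ < 1) (hq0 : 0 < q) (hq1 : q < 1)
    (p C F : ℝ → ℝ) (hp : ContDiff ℝ 2 p) (hC : ContDiff ℝ 2 C) (hF : ContDiff ℝ 2 F)
    (x1 x2 z1 : ℝ)
    (hfoc1 : (1 - σ) * (p (x1 + x2) + x1 * deriv p (x1 + x2)) = deriv C x1)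
    (hfoc2 : q * deriv F (x1 * p (x1 + x2) - z1) = (1 - q) * σ)
    (hC' : 0 < deriv C x1)
    (hppos : 0 < p (x1 + x2))
    (hF2 : 0 < deriv (deriv F) (x1 * p (x1 + x2) - z1))
    (hC2 : 0 ≤ deriv (deriv C) x1)
    (hp' : deriv p (x1 + x2) < 0)
    (hmix : deriv p (x1 + x2) + x1 * deriv (deriv p) (x1 + x2) ≤ 0)
    (hsum : 0 ≤ p (x1 + x2) + 2 * x1 * deriv p (x1 + x2)) :
    (Px1x1 σ q p C F x1 x2 z1 * Pz1z1 σ q p C F x1 x2 z1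
        - (Px1z1 σ q p C F x1 x2 z1) ^ 2
      > |Px1x2 σ q p C F x1 x2 z1 * Pz1z1 σ q p C F x1 x2 z1
          - Px1z1 σ q p C F x1 x2 z1 * Px2z1 σ q p C F x1 x2 z1|)
    ∧ -Px1x1 σ q p C F x1 x2 z1 ≥ |Px1x2 σ q p C F x1 x2 z1| := by
  -- differentiability facts
  have hp1 : Differentiable ℝ p := hp.differentiable two_ne_zero
  have hC1 : Differentiable ℝ C := hC.differentiable two_ne_zero
  have hF1 : Differentiable ℝ F := hF.differentiable two_ne_zero
  have dd : ∀ g : ℝ → ℝ, ContDiff ℝ 2 g → Differentiable ℝ (deriv g) := by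
    intro g hg
    have h : ContDiff ℝ (1 + 1) g := by norm_num; exact hg
    exact (contDiff_succ_iff_deriv.mp h).2.2.differentiable one_ne_zero
  have hp2 : Differentiable ℝ (deriv p) := dd p hp
  have hC2' : Differentiable ℝ (deriv C) := dd C hC
  have hF2' : Differentiable ℝ (deriv F) := dd F hF
  -- shift derivatives
  have hsh : ∀ (g : ℝ → ℝ), Differentiable ℝ g → ∀ (v u : ℝ),
      HasDerivAt (fun v => g (v + u)) (deriv g (v + u)) v := by
    intro g hg v u
    simpa [Function.comp_def] using ((hg (v + u)).hasDerivAt).comp v ((hasDerivAt_id v).add_const u)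
  have hsh' : ∀ (g : ℝ → ℝ), Differentiable ℝ g → ∀ (u v : ℝ),
      HasDerivAt (fun u => g (v + u)) (deriv g (v + u)) u := by
    intro g hg u v
    simpa [Function.comp_def] using ((hg (v + u)).hasDerivAt).comp u ((hasDerivAt_id u).const_add v)
  -- first partial in x1
  have key1 : ∀ (u w v : ℝ), HasDerivAt (fun v => P σ q p C F v u w)
      ((1 - q * σ) * (p (v + u) + v * deriv p (v + u)) - deriv C v
        - q * (deriv F (v * p (v + u) - w) * (p (v + u) + v * deriv p (v + u)))) v := by
    intro u w v
    have hA := hsh p hp1 v u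
    have hg : HasDerivAt (fun v : ℝ => v * p (v + u))
        (p (v + u) + v * deriv p (v + u)) v := by
      simpa [add_comm, Pi.mul_def] using (hasDerivAt_id' (x := v)).mul hA
    have hFc : HasDerivAt (fun v : ℝ => F (v * p (v + u) - w))
        (deriv F (v * p (v + u) - w) * (p (v + u) + v * deriv p (v + u))) v := by
      simpa [Function.comp_def] using ((hF1 (v * p (v + u) - w)).hasDerivAt).comp v (hg.sub_const w)
    have hd := (((hg.const_mul (1 - q * σ)).sub (hC1 v).hasDerivAt).sub_const
        ((1 - q) * σ * w)).sub (hFc.const_mul q)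
    have heq : (fun v => P σ q p C F v u w)
        = fun v => (1 - q * σ) * (v * p (v + u)) - C v - (1 - q) * σ * w
            - q * F (v * p (v + u) - w) := by
      funext v; simp only [P]; ring
    rw [heq]
    exact hd
  -- first partial in x2
  have key2 : ∀ (w u : ℝ), HasDerivAt (fun u => P σ q p C F x1 u w)
      ((1 - q * σ) * (x1 * deriv p (x1 + u))
        - q * (deriv F (x1 * p (x1 + u) - w) * (x1 * deriv p (x1 + u)))) u := by
    intro w u
    have hA := hsh' p hp1 u x1
    have hg : HasDerivAt (fun u : ℝ => x1 * p (x1 + u)) (x1 * deriv p (x1 + u)) u :=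
      hA.const_mul x1
    have hFc : HasDerivAt (fun u : ℝ => F (x1 * p (x1 + u) - w))
        (deriv F (x1 * p (x1 + u) - w) * (x1 * deriv p (x1 + u))) u := by
      simpa [Function.comp_def] using ((hF1 (x1 * p (x1 + u) - w)).hasDerivAt).comp u (hg.sub_const w)
    have hd := (((hg.const_mul (1 - q * σ)).sub (hasDerivAt_const u (C x1))).sub_const
        ((1 - q) * σ * w)).sub (hFc.const_mul q)
    have heq : (fun u => P σ q p C F x1 u w)
        = fun u => (1 - q * σ) * (x1 * p (x1 + u)) - C x1 - (1 - q) * σ * w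
            - q * F (x1 * p (x1 + u) - w) := by
      funext u; simp only [P]; ring
    simp only [Pi.sub_def] at hd
    rw [heq]
    exact hd.congr_deriv (by ring)
  -- abbreviations
  set a := p (x1 + x2) with ha
  set b := deriv p (x1 + x2) with hb
  set d := deriv (deriv p) (x1 + x2) with hd0
  set f1 := deriv F (x1 * a - z1) with hf1'
  set f2 := deriv (deriv F) (x1 * a - z1) with hf2'
  set c2 := deriv (deriv C) x1 with hc2'
  set g := a + x1 * b with hg0
  -- derivative of F' composed with w ↦ x1*a - w
  have hFw : ∀ w : ℝ, HasDerivAt (fun w : ℝ => deriv F (x1 * a - w))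
      (deriv (deriv F) (x1 * a - w) * (-1)) w := by
    intro w
    simpa [Function.comp_def] using ((hF2' (x1 * a - w)).hasDerivAt).comp w ((hasDerivAt_id' (x := w)).const_sub (x1 * a))
  -- Pz1z1
  have ePzz : Pz1z1 σ q p C F x1 x2 z1 = -(q * f2) := by
    have key3 : ∀ w : ℝ, HasDerivAt (fun w => P σ q p C F x1 x2 w)
        (q * deriv F (x1 * a - w) - (1 - q) * σ) w := by
      intro w
      have hFc : HasDerivAt (fun w : ℝ => F (x1 * a - w))
          (deriv F (x1 * a - w) * (-1)) w := by
        simpa [Function.comp_def] using ((hF1 (x1 * a - w)).hasDerivAt).comp w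
          ((hasDerivAt_id' (x := w)).const_sub (x1 * a))
      have hd := (((hasDerivAt_const w ((1 - q * σ) * x1 * a)).sub
          (hasDerivAt_const w (C x1))).sub
          ((hasDerivAt_id' (x := w)).const_mul ((1 - q) * σ))).sub (hFc.const_mul q)
      have heq : (fun w => P σ q p C F x1 x2 w)
          = fun w => (1 - q * σ) * x1 * a - C x1 - (1 - q) * σ * w - q * F (x1 * a - w) := by
        funext w; simp only [P, ha]
      simp only [Pi.sub_def] at hd
      rw [heq]
      exact hd.congr_deriv (by ring)
    have hder : deriv (fun w => P σ q p C F x1 x2 w)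
        = fun w => q * deriv F (x1 * a - w) - (1 - q) * σ :=
      funext fun w => (key3 w).deriv
    have hd2 : HasDerivAt (fun w => q * deriv F (x1 * a - w) - (1 - q) * σ)
        (q * (deriv (deriv F) (x1 * a - z1) * (-1)) - 0) z1 :=
      ((hFw z1).const_mul q).sub (hasDerivAt_const z1 ((1 - q) * σ))
    rw [Pz1z1, hder]
    rw [hd2.deriv]
    ring
  -- Px1z1
  have eP1z : Px1z1 σ q p C F x1 x2 z1 = q * f2 * g := by
    have hder : (fun w => deriv (fun v => P σ q p C F v x2 w) x1)
        = fun w => (1 - q * σ) * g - deriv C x1 - q * (deriv F (x1 * a - w) * g) :=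
      funext fun w => by
        rw [(key1 x2 w x1).deriv]
    have hd2 : HasDerivAt (fun w => (1 - q * σ) * g - deriv C x1
          - q * (deriv F (x1 * a - w) * g))
        (0 - 0 - q * ((deriv (deriv F) (x1 * a - z1) * (-1)) * g)) z1 := by
      exact ((hasDerivAt_const z1 ((1 - q * σ) * g)).sub (hasDerivAt_const z1 (deriv C x1))).sub
        (((hFw z1).mul_const g).const_mul q)
    rw [Px1z1, hder, hd2.deriv]
    ring
  -- Px2z1
  have eP2z : Px2z1 σ q p C F x1 x2 z1 = q * f2 * (x1 * b) := by
    have hder : (fun w => deriv (fun u => P σ q p C F x1 u w) x2)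
        = fun w => (1 - q * σ) * (x1 * b) - q * (deriv F (x1 * a - w) * (x1 * b)) :=
      funext fun w => by
        rw [(key2 w x2).deriv]
    have hd2 : HasDerivAt (fun w => (1 - q * σ) * (x1 * b)
          - q * (deriv F (x1 * a - w) * (x1 * b)))
        (0 - q * ((deriv (deriv F) (x1 * a - z1) * (-1)) * (x1 * b))) z1 :=
      (hasDerivAt_const z1 ((1 - q * σ) * (x1 * b))).sub
        (((hFw z1).mul_const (x1 * b)).const_mul q)
    rw [Px2z1, hder, hd2.deriv]
    ring
  -- Px1x1
  have eP11 : Px1x1 σ q p C F x1 x2 z1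
      = (1 - σ) * (2 * b + x1 * d) - c2 - q * f2 * g ^ 2 := by
    have hder : deriv (fun v => P σ q p C F v x2 z1)
        = fun v => (1 - q * σ) * (p (v + x2) + v * deriv p (v + x2)) - deriv C v
            - q * (deriv F (v * p (v + x2) - z1) * (p (v + x2) + v * deriv p (v + x2))) :=
      funext fun v => (key1 x2 z1 v).deriv
    have h1 := hsh p hp1 x1 x2
    have h2 := hsh (deriv p) hp2 x1 x2
    have h3 : HasDerivAt (fun v : ℝ => v * deriv p (v + x2)) (b + x1 * d) x1 := by
      simpa [add_comm, hb, hd0, Pi.mul_def] using (hasDerivAt_id' (x := x1)).mul h2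
    have hgsum : HasDerivAt (fun v : ℝ => p (v + x2) + v * deriv p (v + x2))
        (b + (b + x1 * d)) x1 := h1.add h3
    have hgrev : HasDerivAt (fun v : ℝ => v * p (v + x2)) g x1 := by
      simpa [add_comm, ha, hb, hg0, Pi.mul_def] using (hasDerivAt_id' (x := x1)).mul h1
    have hFcomp : HasDerivAt (fun v : ℝ => deriv F (v * p (v + x2) - z1)) (f2 * g) x1 := by
      simpa [hf2', Function.comp_def] using ((hF2' (x1 * a - z1)).hasDerivAt).comp x1 (hgrev.sub_const z1)
    have hprod : HasDerivAt (fun v : ℝ =>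
          deriv F (v * p (v + x2) - z1) * (p (v + x2) + v * deriv p (v + x2)))
        (f2 * g * (a + x1 * b) + f1 * (b + (b + x1 * d))) x1 := by
      simpa [hf1', ha, hb, Pi.mul_def] using hFcomp.mul hgsum
    have hd2 := ((hgsum.const_mul (1 - q * σ)).sub (hC2' x1).hasDerivAt).sub
        (hprod.const_mul q)
    simp only [Pi.sub_def] at hd2
    rw [Px1x1, hder, hd2.deriv]
    rw [← hc2', ← hg0]
    linear_combination (-(2 * b + x1 * d)) * hfoc2
  -- Px1x2
  have eP12 : Px1x2 σ q p C F x1 x2 z1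
      = (1 - σ) * (b + x1 * d) - q * f2 * (x1 * b) * g := by
    have hder : (fun u => deriv (fun v => P σ q p C F v u z1) x1)
        = fun u => (1 - q * σ) * (p (x1 + u) + x1 * deriv p (x1 + u)) - deriv C x1
            - q * (deriv F (x1 * p (x1 + u) - z1) * (p (x1 + u) + x1 * deriv p (x1 + u))) :=
      funext fun u => (key1 u z1 x1).deriv
    have h1 := hsh' p hp1 x2 x1
    have h2 := hsh' (deriv p) hp2 x2 x1
    have hgsum : HasDerivAt (fun u : ℝ => p (x1 + u) + x1 * deriv p (x1 + u))
        (b + x1 * d) x2 := h1.add (h2.const_mul x1)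
    have hFcomp : HasDerivAt (fun u : ℝ => deriv F (x1 * p (x1 + u) - z1))
        (f2 * (x1 * b)) x2 := by
      simpa [hf2', Function.comp_def] using ((hF2' (x1 * a - z1)).hasDerivAt).comp x2
        (((h1.const_mul x1).sub_const z1))
    have hprod : HasDerivAt (fun u : ℝ =>
          deriv F (x1 * p (x1 + u) - z1) * (p (x1 + u) + x1 * deriv p (x1 + u)))
        (f2 * (x1 * b) * (a + x1 * b) + f1 * (b + x1 * d)) x2 := by
      simpa [hf1', ha, hb, Pi.mul_def] using hFcomp.mul hgsum
    have hd2 := ((hgsum.const_mul (1 - q * σ)).sub (hasDerivAt_const x2 (deriv C x1))).sub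
        (hprod.const_mul q)
    simp only [Pi.sub_def] at hd2
    rw [Px1x2, hder, hd2.deriv]
    rw [← hg0]
    linear_combination (-(b + x1 * d)) * hfoc2
  -- the final algebra
  rw [eP11, ePzz, eP1z, eP12, eP2z]
  have hσ' : (0:ℝ) < 1 - σ := by linarith
  have hqf2 : 0 < q * f2 := mul_pos hq0 hF2
  have hg : 0 < g := by
    by_contra h
    push_neg at h
    have h2 : 0 < (1 - σ) * g := by rw [hg0]; rw [hfoc1]; exact hC'
    nlinarith
  clear key1 key2 hFw hsh hsh' hp hC hF hp1 hC1 hF1 dd hp2 hC2' hF2' eP11 ePzz eP1z eP12 eP2z hfoc1 hfoc2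
  have hb' : 0 < (1 - σ) * (-b) := mul_pos hσ' (neg_pos.2 hp')
  constructor
  · have hM : 0 ≤ ((1 - σ) * (b + x1 * d) - q * f2 * (x1 * b) * g) * -(q * f2)
        - q * f2 * g * (q * f2 * (x1 * b)) := by
      have he : ((1 - σ) * (b + x1 * d) - q * f2 * (x1 * b) * g) * -(q * f2)
          - q * f2 * g * (q * f2 * (x1 * b))
          = (q * f2 * (1 - σ)) * (-(b + x1 * d)) := by ring
      rw [he]
      exact mul_nonneg (mul_nonneg hqf2.le hσ'.le) (neg_nonneg.2 hmix)
    rw [abs_of_nonneg hM]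
    have hpos : 0 < (q * f2) * (c2 - (1 - σ) * b) :=
      mul_pos hqf2 (by nlinarith)
    nlinarith [hpos]
  · rw [ge_iff_le, abs_le]
    constructor
    · nlinarith [mul_nonneg (mul_nonneg hqf2.le hg.le) hppos.le,
        mul_pos hσ' (neg_pos.2 hp')]
    · have hGx : 0 ≤ g + x1 * b := by rw [hg0]; linarith
      nlinarith [mul_nonneg (mul_nonneg hqf2.le hg.le) hGx,
        mul_pos hσ' (neg_pos.2 hp'),
        mul_nonneg hσ'.le (neg_nonneg.2 hmix)]
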